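/- (Weight-zero case of the paper's Corollary on compatibility of the p-saturated filtration with the Witt-vector operations.) For all integers r ≥ 0 and n ≥ 1: V(Fil^p_r Wₙ(L)) ⊆ Fil^p_r W_{n+1}(L); F(Fil^p_r W_{n+1}(L)) ⊆ Fil^p_r Wₙ(L); R(Fil^p_r W_{n+1}(L)) ⊆ Fil^p_r Wₙ(L); p̲(Fil^p_r Wₙ(L)) ⊆ Fil^p_r W_{n+1}(L); and moreover p̲(Fil^p_r Wₙ(L)) = p·Fil^p_{pr} W_{n+1}(L). -/

import Mathlib

set_option linter.unusedSectionVars false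
set_option maxHeartbeats 1000000


noncomputable section

open scoped Classical

/-- A discretely valued field: a field `L` together with a normalized additive valuation
`v : L → ℤ ∪ {∞}` and a uniformizer `z` (so `v z = 1`).  The valuation ring is
`O = {a : L | 0 ≤ v a}`, with maximal ideal `𝔪 = {a : L | 1 ≤ v a}`. -/
structure DVField (L : Type) [Field L] : Type where
  v : L → WithTop ℤ
  z : L
  v_top : ∀ a : L, v a = ⊤ ↔ a = 0
  v_mul : ∀ a b : L, v (a * b) = v a + v b
  v_add : ∀ a b : L, min (v a) (v b) ≤ v (a + b)
  v_z : v z = 1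

namespace DVField

variable {L : Type} [Field L]

/-- `Wₙ(O) ⊆ Wₙ(L)`: the truncated Witt vectors all of whose components are integral. -/
def WO (D : DVField L) (p n : ℕ) : Set (TruncatedWittVector p n L) :=
  {x | ∀ i : Fin n, 0 ≤ D.v (x.coeff i)}

/-- The Brylinski–Kato filtration
`fil^log_r Wₙ(L) = {(a₀, …, a_{n-1}) | p^{n-1-i} · v(aᵢ) ≥ -r for all i}`. -/
def filLog (D : DVField L) (p r n : ℕ) : Set (TruncatedWittVector p n L) :=
  {x | ∀ i : Fin n, (↑(-(r : ℤ)) : WithTop ℤ) ≤ p ^ (n - 1 - (i : ℕ)) • D.v (x.coeff i)}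

end DVField

/-- The Verschiebung `V : Wₙ(L) → W_{n+1}(L)`, shifting components. -/
def wV {p : ℕ} {L : Type} [Field L] {n : ℕ} (x : TruncatedWittVector p n L) :
    TruncatedWittVector p (n + 1) L :=
  TruncatedWittVector.mk p fun i =>
    if h : (i : ℕ) = 0 then 0 else x.coeff ⟨(i : ℕ) - 1, by have := i.isLt; omega⟩

/-- The iterated Verschiebung `V^{n-m} : W_m(L) → Wₙ(L)` (for `m ≤ n`), given by shifting
components by `n - m`. -/
def wVit {p : ℕ} {L : Type} [Field L] {m n : ℕ} (x : TruncatedWittVector p m L) :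
    TruncatedWittVector p n L :=
  TruncatedWittVector.mk p fun i =>
    if h : n - m ≤ (i : ℕ) ∧ (i : ℕ) - (n - m) < m then x.coeff ⟨(i : ℕ) - (n - m), h.2⟩ else 0

/-- The restriction `R : W_{n+1}(L) → Wₙ(L)`, dropping the last component. -/
def wR {p : ℕ} {L : Type} [Field L] {n : ℕ} (x : TruncatedWittVector p (n + 1) L) :
    TruncatedWittVector p n L :=
  TruncatedWittVector.mk p fun i => x.coeff i.castSucc

/-- The iterated restriction `R^{m-n} : W_m(L) → Wₙ(L)` (for `n ≤ m`), keeping the first `n`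
components. -/
def wRes {p : ℕ} {L : Type} [Field L] {m n : ℕ} (x : TruncatedWittVector p m L) :
    TruncatedWittVector p n L :=
  TruncatedWittVector.mk p fun i => if h : (i : ℕ) < m then x.coeff ⟨(i : ℕ), h⟩ else 0

/-- The Frobenius `F : W_{n+1}(L) → Wₙ(L)` in characteristic `p`:
componentwise `p`-th power followed by restriction. -/
def wF {p : ℕ} {L : Type} [Field L] {n : ℕ} (x : TruncatedWittVector p (n + 1) L) :
    TruncatedWittVector p n L :=
  TruncatedWittVector.mk p fun i => x.coeff i.castSucc ^ p

/-- The Teichmüller lift `[a] = (a, 0, …, 0)`. -/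
def wT (p : ℕ) {L : Type} [Field L] (n : ℕ) (a : L) : TruncatedWittVector p n L :=
  TruncatedWittVector.mk p fun i => if (i : ℕ) = 0 then a else 0

/-- The map `p̲ : Wₙ(L) → W_{n+1}(L)`: lift to length `n+1` (by appending a zero component)
and multiply by `p`. -/
def wP {p : ℕ} [Fact p.Prime] {L : Type} [Field L] {n : ℕ} (x : TruncatedWittVector p n L) :
    TruncatedWittVector p (n + 1) L :=
  p • (wRes x : TruncatedWittVector p (n + 1) L)

namespace DVField

variable {L : Type} [Field L]

/-- The Kato–Matsuda filtration
`fil_r Wₙ(L) = fil^log_{r-1} Wₙ(L) + V^{n-m}(fil^log_r W_m(L))` where `m = min(v_p(r), n)`,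
and `fil_0 Wₙ(L) = Wₙ(O)`. -/
def filKM (D : DVField L) (p : ℕ) [Fact p.Prime] (r n : ℕ) :
    Set (TruncatedWittVector p n L) :=
  if r = 0 then D.WO p n
  else {x | ∃ a ∈ D.filLog p (r - 1) n,
    ∃ b ∈ D.filLog p r (min (padicValNat p r) n), x = a + wVit b}

/-- The `p`-saturation `Fil^p_r Wₙ(L) = Σ_{s=0}^{n-1} p^s · fil_{r·p^s} Wₙ(L)`. -/
def FilP (D : DVField L) (p : ℕ) [Fact p.Prime] (r n : ℕ) :
    Set (TruncatedWittVector p n L) :=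
  {x | ∃ f : Fin n → TruncatedWittVector p n L,
      (∀ s : Fin n, f s ∈ D.filKM p (r * p ^ (s : ℕ)) n) ∧
      x = ∑ s : Fin n, p ^ (s : ℕ) • f s}

end DVField

section CondAux
variable {p : ℕ} [hp : Fact p.Prime]

theorem wt_nsmul_coe (k : ℕ) (m : ℤ) : k • ((m : WithTop ℤ)) = (((k * m : ℤ)) : WithTop ℤ) := by
  norm_cast

theorem wt_nsmul_top {k : ℕ} (hk : k ≠ 0) : k • (⊤ : WithTop ℤ) = ⊤ := by
  obtain ⟨j, rfl⟩ := Nat.exists_eq_succ_of_ne_zero hk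
  rw [succ_nsmul]
  exact add_top _

theorem cond_top (r k : ℕ) : ((-(r:ℤ) : ℤ) : WithTop ℤ) ≤ k • (⊤ : WithTop ℤ) := by
  rcases Nat.eq_zero_or_pos k with h | h
  · subst h; rw [zero_nsmul]
    exact_mod_cast neg_nonpos.mpr (Int.ofNat_nonneg r)
  · rw [wt_nsmul_top h.ne']; exact le_top

theorem cond_nonneg {val : WithTop ℤ} (r k : ℕ) (h : 0 ≤ val) :
    ((-(r:ℤ) : ℤ) : WithTop ℤ) ≤ k • val := by
  refine le_trans ?_ (nsmul_nonneg h k)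
  exact_mod_cast neg_nonpos.mpr (Int.ofNat_nonneg r)

theorem nsmul_mul_assoc (c k : ℕ) (val : WithTop ℤ) : (c * k) • val = c • (k • val) := by
  induction val using WithTop.recTopCoe with
  | top =>
    rcases Nat.eq_zero_or_pos c with h | h
    · subst h; simp
    rcases Nat.eq_zero_or_pos k with h2 | h2
    · subst h2; simp [wt_nsmul_top h.ne']
    rw [wt_nsmul_top h2.ne', wt_nsmul_top h.ne', wt_nsmul_top (by positivity : c * k ≠ 0)]
  | coe m =>
    rw [wt_nsmul_coe, wt_nsmul_coe, wt_nsmul_coe]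
    exact_mod_cast mul_assoc (c:ℤ) k m

theorem cond_mul {r k : ℕ} {val : WithTop ℤ}
    (h : ((-(r:ℤ) : ℤ) : WithTop ℤ) ≤ k • val) (c : ℕ) :
    ((-((c * r : ℕ):ℤ) : ℤ) : WithTop ℤ) ≤ (c * k) • val := by
  rw [nsmul_mul_assoc]
  calc ((-((c * r : ℕ):ℤ) : ℤ) : WithTop ℤ) = c • ((-(r:ℤ) : ℤ) : WithTop ℤ) := by
        rw [wt_nsmul_coe]
        exact_mod_cast (by ring : -(((c:ℤ) * r)) = (c:ℤ) * -(r:ℤ))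
    _ ≤ c • (k • val) := nsmul_le_nsmul_right h c

theorem cond_div {r k : ℕ} {val : WithTop ℤ}
    (h : ((-(r:ℤ) : ℤ) : WithTop ℤ) ≤ (k * p) • val) :
    ((-(r:ℤ) : ℤ) : WithTop ℤ) ≤ k • val := by
  induction val using WithTop.recTopCoe with
  | top => exact cond_top r k
  | coe m =>
    rw [wt_nsmul_coe] at h ⊢
    rw [WithTop.coe_le_coe] at h ⊢
    have hp1 : (1:ℤ) ≤ p := by exact_mod_cast hp.out.one_lt.le
    have hk0 : (0:ℤ) ≤ k := Int.ofNat_nonneg k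
    push_cast at h
    rcases le_or_gt 0 m with hm | hm
    · have : (0:ℤ) ≤ (k:ℤ) * m := mul_nonneg hk0 hm
      have : (0:ℤ) ≤ (r:ℤ) := Int.ofNat_nonneg r
      linarith
    · nlinarith

theorem cond_div_exact {r k : ℕ} {val : WithTop ℤ}
    (h : ((-((p * r : ℕ):ℤ) : ℤ) : WithTop ℤ) ≤ (k * p) • val) :
    ((-(r:ℤ) : ℤ) : WithTop ℤ) ≤ k • val := by
  induction val using WithTop.recTopCoe with
  | top => exact cond_top r k
  | coe m =>
    rw [wt_nsmul_coe] at h ⊢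
    rw [WithTop.coe_le_coe] at h ⊢
    have hp1 : (0:ℤ) < p := by exact_mod_cast hp.out.pos
    push_cast at h
    have h2 : (p:ℤ) * (-(r:ℤ)) ≤ p * ((k:ℤ) * m) := by nlinarith
    have := le_of_mul_le_mul_left h2 hp1
    linarith

theorem cond_div_strict {r k : ℕ} {val : WithTop ℤ} (hr : 1 ≤ r)
    (h : ((-((p * r - 1 : ℕ):ℤ) : ℤ) : WithTop ℤ) ≤ (k * p) • val) :
    ((-((r - 1 : ℕ):ℤ) : ℤ) : WithTop ℤ) ≤ k • val := by
  induction val using WithTop.recTopCoe with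
  | top => exact cond_top _ k
  | coe m =>
    rw [wt_nsmul_coe] at h ⊢
    rw [WithTop.coe_le_coe] at h ⊢
    have hp1 : (0:ℤ) < p := by exact_mod_cast hp.out.pos
    have hpr : 1 ≤ p * r := Nat.mul_pos hp.out.pos hr
    have hc1 : ((p * r - 1 : ℕ) : ℤ) = (p:ℤ) * r - 1 := by
      push_cast [hpr]; ring
    have hc2 : ((r - 1 : ℕ) : ℤ) = (r:ℤ) - 1 := by push_cast [hr]; ring
    rw [hc1] at h; rw [hc2]
    push_cast at h
    -- from k*p*m ≥ 1 - p*r conclude k*m ≥ 1 - r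
    have h2 : (p:ℤ) * (-(r:ℤ)) < p * ((k:ℤ) * m) := by nlinarith
    have h3 : (-(r:ℤ)) < (k:ℤ) * m := lt_of_mul_lt_mul_left h2 hp1.le
    have h4 := Int.add_one_le_iff.mpr h3
    linarith

end CondAux

section WittAux
open TruncatedWittVector
variable {p : ℕ} [hp : Fact p.Prime] {L : Type} [Field L] [CharP L p] {n N : ℕ}

theorem wV_coeff (x : TruncatedWittVector p n L) (i : Fin (n+1)) :
    (wV x).coeff i =
      if h : (i : ℕ) = 0 then 0 else x.coeff ⟨(i : ℕ) - 1, by have := i.isLt; omega⟩ :=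
  coeff_mk _ _

theorem wVit_coeff {m : ℕ} (x : TruncatedWittVector p m L) (i : Fin n) :
    (wVit x).coeff i =
      if h : n - m ≤ (i : ℕ) ∧ (i : ℕ) - (n - m) < m then x.coeff ⟨(i : ℕ) - (n - m), h.2⟩
      else 0 :=
  coeff_mk _ _

theorem wR_coeff (x : TruncatedWittVector p (n+1) L) (i : Fin n) :
    (wR x).coeff i = x.coeff i.castSucc :=
  coeff_mk _ _

theorem wRes_coeff {m : ℕ} (x : TruncatedWittVector p m L) (i : Fin n) :
    (wRes x).coeff i = if h : (i : ℕ) < m then x.coeff ⟨(i : ℕ), h⟩ else 0 :=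
  coeff_mk _ _

theorem wF_coeff (x : TruncatedWittVector p (n+1) L) (i : Fin n) :
    (wF x).coeff i = x.coeff i.castSucc ^ p :=
  coeff_mk _ _

theorem psmul_eq (x : TruncatedWittVector p N L) :
    p • x = WittVector.truncateFun N (x.out * (p : WittVector p L)) := by
  have h1 := WittVector.truncateFun_nsmul (R := L) (n := N) p x.out
  rw [truncateFun_out] at h1
  rw [← h1, nsmul_eq_mul, mul_comm]

theorem psmul_coeff_zero (x : TruncatedWittVector p N L) (i : Fin N) (h : (i : ℕ) = 0) :
    (p • x).coeff i = 0 := by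
  rw [psmul_eq, WittVector.coeff_truncateFun]
  show (x.out * (p : WittVector p L)).coeff (i : ℕ) = 0
  rw [h]
  exact WittVector.mul_charP_coeff_zero x.out

theorem psmul_coeff_succ (x : TruncatedWittVector p N L) (i : Fin N) (h : (i : ℕ) ≠ 0) :
    (p • x).coeff i = x.coeff ⟨(i : ℕ) - 1, by have := i.isLt; omega⟩ ^ p := by
  rw [psmul_eq, WittVector.coeff_truncateFun]
  show (x.out * (p : WittVector p L)).coeff (i : ℕ) = _
  obtain ⟨j, hj⟩ : ∃ j, (i : ℕ) = j + 1 := ⟨(i : ℕ) - 1, by omega⟩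
  conv_lhs => rw [hj]
  rw [WittVector.mul_charP_coeff_succ]
  have hiN := i.isLt
  have hjN : j < N := by omega
  have hco : x.out.coeff j = x.coeff ⟨j, hjN⟩ := coeff_out x ⟨j, hjN⟩
  rw [hco]
  exact congrArg (fun k => x.coeff k ^ p) (Fin.ext (by show j = (i:ℕ) - 1; omega))

theorem psmul_congr {y y' : TruncatedWittVector p (n+1) L} (h : wR y = wR y') :
    p • y = p • y' := by
  apply TruncatedWittVector.ext
  intro i
  rcases eq_or_ne (i : ℕ) 0 with h0 | h0
  · rw [psmul_coeff_zero y i h0, psmul_coeff_zero y' i h0]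
  · rw [psmul_coeff_succ y i h0, psmul_coeff_succ y' i h0]
    congr 1
    have hlt : (i : ℕ) - 1 < n := by have := i.isLt; omega
    have := congrArg (fun w => TruncatedWittVector.coeff ⟨(i:ℕ) - 1, hlt⟩ w) h
    simp only [wR_coeff] at this
    convert this using 2
    all_goals exact Fin.ext rfl

theorem pow_smul_coeff_zero : ∀ (j : ℕ) (x : TruncatedWittVector p N L) (i : Fin N),
    (i : ℕ) < j → ((p ^ j) • x).coeff i = 0 := by
  intro j
  induction j with
  | zero => intro x i hi; omega
  | succ j ih =>
    intro x i hi
    have : (p ^ (j+1)) • x = p • ((p ^ j) • x) := by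
      rw [pow_succ]
      exact mul_nsmul x (p ^ j) p
    rw [this]
    rcases eq_or_ne (i : ℕ) 0 with h0 | h0
    · exact psmul_coeff_zero _ i h0
    · rw [psmul_coeff_succ _ i h0]
      have hiN := i.isLt
      have h1 : TruncatedWittVector.coeff (⟨(i:ℕ) - 1, by omega⟩ : Fin N) ((p ^ j) • x) = 0 :=
        ih x ⟨(i:ℕ) - 1, by omega⟩ (by show (i:ℕ) - 1 < j; omega)
      exact (congrArg (· ^ p) h1).trans (zero_pow hp.out.ne_zero)

theorem pow_card_smul_zero (x : TruncatedWittVector p N L) : (p ^ N) • x = 0 := by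
  apply TruncatedWittVector.ext
  intro i
  rw [pow_smul_coeff_zero N x i i.isLt, coeff_zero]

theorem wR_eq (x : TruncatedWittVector p (n+1) L) :
    wR x = TruncatedWittVector.truncate (Nat.le_succ n) x := by
  apply TruncatedWittVector.ext
  intro i
  rw [wR_coeff, TruncatedWittVector.coeff_truncate]
  exact congrArg (fun j => x.coeff j) (Fin.ext rfl)

theorem wV_eq (x : TruncatedWittVector p n L) :
    wV x = WittVector.truncateFun (n+1) (WittVector.verschiebung x.out) := by
  apply TruncatedWittVector.ext
  intro i
  rw [wV_coeff, WittVector.coeff_truncateFun]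
  rcases eq_or_ne (i : ℕ) 0 with h0 | h0
  · rw [dif_pos h0, h0, WittVector.verschiebung_coeff_zero]
  · rw [dif_neg h0]
    obtain ⟨j, hj⟩ : ∃ j, (i : ℕ) = j + 1 := ⟨(i : ℕ) - 1, by omega⟩
    conv_rhs => rw [hj]
    rw [WittVector.verschiebung_coeff_succ]
    have hiN := i.isLt
    have hjN : j < n := by omega
    have hco : x.out.coeff j = x.coeff ⟨j, hjN⟩ := coeff_out x ⟨j, hjN⟩
    rw [hco]
    exact congrArg (fun k => x.coeff k) (Fin.ext (by show (i:ℕ) - 1 = j; omega))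

theorem wF_eq (x : TruncatedWittVector p (n+1) L) :
    wF x = WittVector.truncateFun n (WittVector.frobenius x.out) := by
  apply TruncatedWittVector.ext
  intro i
  rw [wF_coeff, WittVector.coeff_truncateFun, WittVector.coeff_frobenius_charP]
  have hco : x.out.coeff (i:ℕ) = x.coeff ⟨(i:ℕ), by have := i.isLt; omega⟩ :=
    coeff_out x ⟨(i:ℕ), by have := i.isLt; omega⟩
  rw [hco]
  exact congrArg (fun k => x.coeff k ^ p) (Fin.ext rfl)

theorem wV_add (x y : TruncatedWittVector p n L) : wV (x + y) = wV x + wV y := by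
  rw [wV_eq, wV_eq, wV_eq, ← WittVector.truncateFun_add, ← map_add]
  apply TruncatedWittVector.ext
  intro i
  rw [WittVector.coeff_truncateFun, WittVector.coeff_truncateFun]
  rcases eq_or_ne (i : ℕ) 0 with h0 | h0
  · rw [h0, WittVector.verschiebung_coeff_zero, WittVector.verschiebung_coeff_zero]
  · obtain ⟨j, hj⟩ : ∃ j, (i : ℕ) = j + 1 := ⟨(i : ℕ) - 1, by omega⟩
    rw [hj, WittVector.verschiebung_coeff_succ, WittVector.verschiebung_coeff_succ]
    have hiN := i.isLt
    have hjn : j < n := by omega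
    have key : WittVector.truncateFun n ((x + y).out)
        = WittVector.truncateFun n (x.out + y.out) := by
      rw [WittVector.truncateFun_add, truncateFun_out, truncateFun_out, truncateFun_out]
    have h3 := congrArg (fun w => TruncatedWittVector.coeff (⟨j, hjn⟩ : Fin n) w) key
    simp only [WittVector.coeff_truncateFun] at h3
    exact h3

theorem wV_zero : wV (0 : TruncatedWittVector p n L) = 0 := by
  apply TruncatedWittVector.ext
  intro i
  rw [wV_coeff, coeff_zero]
  split <;> simp [coeff_zero]

theorem wF_add (x y : TruncatedWittVector p (n+1) L) : wF (x + y) = wF x + wF y := by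
  rw [wF_eq, wF_eq, wF_eq, ← WittVector.truncateFun_add, ← map_add]
  apply TruncatedWittVector.ext
  intro i
  rw [WittVector.coeff_truncateFun, WittVector.coeff_truncateFun]
  rw [WittVector.coeff_frobenius_charP, WittVector.coeff_frobenius_charP]
  have hin : (i:ℕ) < n + 1 := by have := i.isLt; omega
  have key : WittVector.truncateFun (n+1) ((x + y).out)
      = WittVector.truncateFun (n+1) (x.out + y.out) := by
    rw [WittVector.truncateFun_add, truncateFun_out, truncateFun_out, truncateFun_out]
  have h3 := congrArg (fun w => TruncatedWittVector.coeff (⟨(i:ℕ), hin⟩ : Fin (n+1)) w) key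
  simp only [WittVector.coeff_truncateFun] at h3
  exact congrArg (· ^ p) h3

theorem wF_zero : wF (0 : TruncatedWittVector p (n+1) L) = 0 := by
  apply TruncatedWittVector.ext
  intro i
  rw [wF_coeff, coeff_zero, coeff_zero, zero_pow hp.out.ne_zero]

theorem wVit_zero {m : ℕ} : wVit (0 : TruncatedWittVector p m L) = (0 : TruncatedWittVector p n L) := by
  apply TruncatedWittVector.ext
  intro i
  rw [wVit_coeff, coeff_zero]
  split <;> simp [coeff_zero]

theorem wR_wRes (x : TruncatedWittVector p n L) :
    wR (wRes x : TruncatedWittVector p (n+1) L) = x := by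
  apply TruncatedWittVector.ext
  intro i
  rw [wR_coeff, wRes_coeff]
  rw [dif_pos (show ((i.castSucc : Fin (n+1)) : ℕ) < n from i.isLt)]
  exact congrArg (fun j => x.coeff j) (Fin.ext rfl)

theorem wR_add (x y : TruncatedWittVector p (n+1) L) : wR (x + y) = wR x + wR y := by
  rw [wR_eq, wR_eq, wR_eq, map_add]

/-- bundled homs -/
def wVhom : TruncatedWittVector p n L →+ TruncatedWittVector p (n+1) L :=
  { toFun := wV, map_zero' := wV_zero, map_add' := wV_add }

def wFhom : TruncatedWittVector p (n+1) L →+ TruncatedWittVector p n L :=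
  { toFun := wF, map_zero' := wF_zero, map_add' := wF_add }

noncomputable def wRhom : TruncatedWittVector p (n+1) L →+ TruncatedWittVector p n L :=
  (TruncatedWittVector.truncate (Nat.le_succ n)).toAddMonoidHom

theorem wRhom_apply (x : TruncatedWittVector p (n+1) L) : wRhom x = wR x := (wR_eq x).symm

end WittAux


section Filtration

open TruncatedWittVector

variable {p : ℕ} [hp : Fact p.Prime] {L : Type} [Field L] [CharP L p] {n N : ℕ}
variable (D : DVField L)

theorem v_zero : D.v 0 = ⊤ := (D.v_top 0).mpr rfl

theorem v_one : D.v 1 = 0 := by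
  have h := D.v_mul 1 1
  rw [mul_one] at h
  have hne : D.v 1 ≠ ⊤ := fun h' => one_ne_zero ((D.v_top 1).mp h')
  obtain ⟨m, hm⟩ := WithTop.ne_top_iff_exists.mp hne
  rw [← hm] at h ⊢
  rw [← WithTop.coe_add, WithTop.coe_eq_coe] at h
  have hm0 : m = 0 := by omega
  rw [hm0]
  rfl

theorem v_pow (a : L) (k : ℕ) : D.v (a ^ k) = k • D.v a := by
  induction k with
  | zero => rw [pow_zero, zero_nsmul]; exact v_one D
  | succ k ih => rw [pow_succ, D.v_mul, ih, succ_nsmul]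

theorem cond_mono {r r2 k : ℕ} {val : WithTop ℤ} (h12 : r ≤ r2)
    (h : ((-(r:ℤ) : ℤ) : WithTop ℤ) ≤ k • val) :
    ((-(r2:ℤ) : ℤ) : WithTop ℤ) ≤ k • val := by
  refine le_trans ?_ h
  exact_mod_cast neg_le_neg (Int.ofNat_le.mpr h12)

theorem cond_pow_p {r k : ℕ} {a : L}
    (h : ((-(r:ℤ) : ℤ) : WithTop ℤ) ≤ (k * p) • D.v a) :
    ((-(r:ℤ) : ℤ) : WithTop ℤ) ≤ k • D.v (a ^ p) := by
  rw [v_pow, nsmul_mul_assoc] at *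
  exact h

theorem vtop_cond (r k : ℕ) : ((-(r:ℤ) : ℤ) : WithTop ℤ) ≤ k • D.v 0 := by
  rw [v_zero]
  exact cond_top r k

theorem padic_mul_p {r' : ℕ} (h : r' ≠ 0) :
    padicValNat p (p * r') = padicValNat p r' + 1 := by
  rw [padicValNat.mul hp.out.ne_zero h, padicValNat.self hp.out.one_lt]
  omega

theorem mem_WO {x : TruncatedWittVector p N L} :
    x ∈ D.WO p N ↔ ∀ i : Fin N, 0 ≤ D.v (x.coeff i) := Iff.rfl

theorem mem_filLog {r : ℕ} {x : TruncatedWittVector p N L} :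
    x ∈ D.filLog p r N ↔
      ∀ i : Fin N, ((-(r:ℤ) : ℤ) : WithTop ℤ) ≤ p ^ (N - 1 - (i:ℕ)) • D.v (x.coeff i) :=
  Iff.rfl

theorem mem_filKM_zero {x : TruncatedWittVector p N L} :
    x ∈ D.filKM p 0 N ↔ x ∈ D.WO p N := by
  rw [DVField.filKM, if_pos rfl]

theorem mem_filKM_pos {r : ℕ} (hr : r ≠ 0) {x : TruncatedWittVector p N L} :
    x ∈ D.filKM p r N ↔
      ∃ a ∈ D.filLog p (r-1) N,
        ∃ b ∈ D.filLog p r (min (padicValNat p r) N), x = a + wVit b := by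
  rw [DVField.filKM, if_neg hr]
  rfl

theorem zero_mem_filKM (r : ℕ) : (0 : TruncatedWittVector p N L) ∈ D.filKM p r N := by
  rcases eq_or_ne r 0 with rfl | hr
  · rw [mem_filKM_zero, mem_WO]
    intro i
    rw [coeff_zero, v_zero]
    exact le_top
  · rw [mem_filKM_pos D hr]
    refine ⟨0, ?_, 0, ?_, by rw [wVit_zero, add_zero]⟩
    · intro i; rw [coeff_zero]; exact vtop_cond D _ _
    · intro i; rw [coeff_zero]; exact vtop_cond D _ _

theorem filKM_wV {r' : ℕ} {x : TruncatedWittVector p n L}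
    (hx : x ∈ D.filKM p r' n) : wV x ∈ D.filKM p r' (n+1) := by
  rcases eq_or_ne r' 0 with rfl | hr
  · rw [mem_filKM_zero, mem_WO] at hx ⊢
    intro i
    rw [wV_coeff]
    split
    · rw [v_zero]; exact le_top
    · exact hx _
  · rw [mem_filKM_pos D hr] at hx ⊢
    obtain ⟨a, ha, b, hb, rfl⟩ := hx
    have hVa : wV a ∈ D.filLog p (r'-1) (n+1) := by
      rw [mem_filLog]
      intro i
      rw [wV_coeff]
      split
      next h0 => exact vtop_cond D _ _
      next h0 =>
        have hiN := i.isLt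
        have hexp : (n+1) - 1 - (i:ℕ) = n - 1 - ((i:ℕ) - 1) := by omega
        rw [hexp]
        exact ((mem_filLog D).mp ha) ⟨(i:ℕ) - 1, by omega⟩
    have hmn : min (padicValNat p r') n ≤ n := Nat.min_le_right _ _
    rcases le_or_gt (padicValNat p r') n with hcase | hcase
    · refine ⟨wV a, hVa,
        TruncatedWittVector.mk p (fun k => b.coeff ⟨(k:ℕ), by have := k.isLt; omega⟩), ?_, ?_⟩
      · rw [mem_filLog]
        intro k
        rw [coeff_mk]
        have hk := k.isLt
        have hexp : min (padicValNat p r') (n+1) - 1 - (k:ℕ) = min (padicValNat p r') n - 1 - (k:ℕ) := by omega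
        rw [hexp]
        exact ((mem_filLog D).mp hb) ⟨(k:ℕ), by omega⟩
      · rw [wV_add]
        congr 1
        apply TruncatedWittVector.ext
        intro i
        rw [wV_coeff, wVit_coeff]
        have hiN := i.isLt
        rcases eq_or_ne (i:ℕ) 0 with h0 | h0
        · rw [dif_pos h0, dif_neg (by omega)]
        · rw [dif_neg h0, wVit_coeff]
          by_cases hc : n - min (padicValNat p r') n ≤ (i:ℕ) - 1 ∧ (i:ℕ) - 1 - (n - min (padicValNat p r') n) < min (padicValNat p r') n
          · rw [dif_pos hc, dif_pos (show (n+1) - min (padicValNat p r') (n+1) ≤ (i:ℕ) ∧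
              (i:ℕ) - ((n+1) - min (padicValNat p r') (n+1)) < min (padicValNat p r') (n+1) by omega), coeff_mk]
            exact congrArg (fun t => b.coeff t)
              (Fin.ext (by show (i:ℕ) - 1 - (n - min (padicValNat p r') n)
                = (i:ℕ) - ((n+1) - min (padicValNat p r') (n+1)); omega))
          · rw [dif_neg hc, dif_neg (by omega)]
    · -- padicValNat p r' > n : min (padicValNat p r') n = n, min (padicValNat p r') (n+1) = n+1
      refine ⟨wV a, hVa,
        TruncatedWittVector.mk p (fun k => if h : (k:ℕ) = 0 then 0
          else b.coeff ⟨(k:ℕ) - 1, by have := k.isLt; omega⟩), ?_, ?_⟩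
      · rw [mem_filLog]
        intro k
        rw [coeff_mk]
        have hk := k.isLt
        split
        next h0 => exact vtop_cond D _ _
        next h0 =>
          have hexp : min (padicValNat p r') (n+1) - 1 - (k:ℕ) = min (padicValNat p r') n - 1 - ((k:ℕ) - 1) := by omega
          rw [hexp]
          exact ((mem_filLog D).mp hb) ⟨(k:ℕ) - 1, by omega⟩
      · rw [wV_add]
        congr 1
        apply TruncatedWittVector.ext
        intro i
        rw [wV_coeff, wVit_coeff]
        have hiN := i.isLt
        rcases eq_or_ne (i:ℕ) 0 with h0 | h0
        · rw [dif_pos h0, dif_pos (show (n+1) - min (padicValNat p r') (n+1) ≤ (i:ℕ) ∧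
            (i:ℕ) - ((n+1) - min (padicValNat p r') (n+1)) < min (padicValNat p r') (n+1) by omega), coeff_mk]
          rw [dif_pos (by show (i:ℕ) - ((n+1) - min (padicValNat p r') (n+1)) = 0; omega)]
        · rw [dif_neg h0, wVit_coeff]
          rw [dif_pos (show n - min (padicValNat p r') n ≤ (i:ℕ) - 1 ∧
              (i:ℕ) - 1 - (n - min (padicValNat p r') n) < min (padicValNat p r') n by omega),
            dif_pos (show (n+1) - min (padicValNat p r') (n+1) ≤ (i:ℕ) ∧
              (i:ℕ) - ((n+1) - min (padicValNat p r') (n+1)) < min (padicValNat p r') (n+1) by omega), coeff_mk]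
          rw [dif_neg (by show ¬ (i:ℕ) - ((n+1) - min (padicValNat p r') (n+1)) = 0; omega)]
          exact congrArg (fun t => b.coeff t)
            (Fin.ext (by show (i:ℕ) - 1 - (n - min (padicValNat p r') n)
              = (i:ℕ) - ((n+1) - min (padicValNat p r') (n+1)) - 1; omega))

theorem filKM_wF {r' : ℕ} {x : TruncatedWittVector p (n+1) L}
    (hx : x ∈ D.filKM p r' (n+1)) : wF x ∈ D.filKM p r' n := by
  rcases eq_or_ne r' 0 with rfl | hr
  · rw [mem_filKM_zero, mem_WO] at hx ⊢
    intro i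
    rw [wF_coeff, v_pow]
    exact nsmul_nonneg (hx _) p
  · rw [mem_filKM_pos D hr] at hx ⊢
    obtain ⟨a, ha, b, hb, rfl⟩ := hx
    have hFa : wF a ∈ D.filLog p (r'-1) n := by
      rw [mem_filLog]
      intro i
      rw [wF_coeff]
      have hiN := i.isLt
      have h1 := ((mem_filLog D).mp ha) i.castSucc
      have hcs : ((i.castSucc : Fin (n+1)) : ℕ) = (i : ℕ) := rfl
      rw [hcs] at h1
      have hexp : (n+1) - 1 - (i:ℕ) = (n - 1 - (i:ℕ)) + 1 := by omega
      rw [hexp, pow_succ] at h1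
      exact cond_pow_p D h1
    rcases le_or_gt (padicValNat p r') n with hcase | hcase
    · refine ⟨wF a, hFa,
        TruncatedWittVector.mk p (fun k => if h : (k:ℕ) = 0 then 0
          else b.coeff ⟨(k:ℕ) - 1, by have := k.isLt; omega⟩ ^ p), ?_, ?_⟩
      · rw [mem_filLog]
        intro k
        rw [coeff_mk]
        have hk := k.isLt
        split
        next h0 => exact vtop_cond D _ _
        next h0 =>
          have h1 := ((mem_filLog D).mp hb) ⟨(k:ℕ) - 1, by omega⟩
          have hexp : min (padicValNat p r') (n+1) - 1 - ((⟨(k:ℕ) - 1, by omega⟩ :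
              Fin (min (padicValNat p r') (n+1))) : ℕ)
              = (min (padicValNat p r') n - 1 - (k:ℕ)) + 1 := by
            show min (padicValNat p r') (n+1) - 1 - ((k:ℕ) - 1)
              = (min (padicValNat p r') n - 1 - (k:ℕ)) + 1
            omega
          rw [hexp, pow_succ] at h1
          exact cond_pow_p D h1
      · rw [wF_add]
        congr 1
        apply TruncatedWittVector.ext
        intro i
        rw [wF_coeff, wVit_coeff, wVit_coeff]
        have hiN := i.isLt
        have hcs : ((i.castSucc : Fin (n+1)) : ℕ) = (i : ℕ) := rfl
        simp only [hcs]
        by_cases hc1 : (n+1) - min (padicValNat p r') (n+1) ≤ (i:ℕ) ∧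
            (i:ℕ) - ((n+1) - min (padicValNat p r') (n+1)) < min (padicValNat p r') (n+1)
        · rw [dif_pos hc1, dif_pos (show n - min (padicValNat p r') n ≤ (i:ℕ) ∧
            (i:ℕ) - (n - min (padicValNat p r') n) < min (padicValNat p r') n by omega), coeff_mk]
          rw [dif_neg (by show ¬ (i:ℕ) - (n - min (padicValNat p r') n) = 0; omega)]
          refine congrArg (fun t => b.coeff t ^ p) (Fin.ext ?_)
          show (i:ℕ) - ((n+1) - min (padicValNat p r') (n+1))
            = (i:ℕ) - (n - min (padicValNat p r') n) - 1
          omega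
        · rw [dif_neg hc1, zero_pow hp.out.ne_zero]
          by_cases hc2 : n - min (padicValNat p r') n ≤ (i:ℕ) ∧
              (i:ℕ) - (n - min (padicValNat p r') n) < min (padicValNat p r') n
          · rw [dif_pos hc2, coeff_mk,
              dif_pos (by show (i:ℕ) - (n - min (padicValNat p r') n) = 0; omega)]
          · rw [dif_neg hc2]
    · refine ⟨wF a, hFa,
        TruncatedWittVector.mk p (fun k =>
          b.coeff ⟨(k:ℕ), by have := k.isLt; omega⟩ ^ p), ?_, ?_⟩
      · rw [mem_filLog]
        intro k
        rw [coeff_mk]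
        have hk := k.isLt
        have h1 := ((mem_filLog D).mp hb) ⟨(k:ℕ), by omega⟩
        have hexp : min (padicValNat p r') (n+1) - 1 - ((⟨(k:ℕ), by omega⟩ :
            Fin (min (padicValNat p r') (n+1))) : ℕ)
            = (min (padicValNat p r') n - 1 - (k:ℕ)) + 1 := by
          show min (padicValNat p r') (n+1) - 1 - (k:ℕ)
            = (min (padicValNat p r') n - 1 - (k:ℕ)) + 1
          omega
        rw [hexp, pow_succ] at h1
        exact cond_pow_p D h1
      · rw [wF_add]
        congr 1
        apply TruncatedWittVector.ext
        intro i
        rw [wF_coeff, wVit_coeff, wVit_coeff]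
        have hiN := i.isLt
        have hcs : ((i.castSucc : Fin (n+1)) : ℕ) = (i : ℕ) := rfl
        simp only [hcs]
        rw [dif_pos (show (n+1) - min (padicValNat p r') (n+1) ≤ (i:ℕ) ∧
            (i:ℕ) - ((n+1) - min (padicValNat p r') (n+1)) < min (padicValNat p r') (n+1) by omega),
          dif_pos (show n - min (padicValNat p r') n ≤ (i:ℕ) ∧
            (i:ℕ) - (n - min (padicValNat p r') n) < min (padicValNat p r') n by omega), coeff_mk]
        refine congrArg (fun t => b.coeff t ^ p) (Fin.ext ?_)
        show (i:ℕ) - ((n+1) - min (padicValNat p r') (n+1)) = (i:ℕ) - (n - min (padicValNat p r') n)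
        omega

theorem filKM_wR {r' : ℕ} {x : TruncatedWittVector p (n+1) L}
    (hx : x ∈ D.filKM p r' (n+1)) : wR x ∈ D.filKM p r' n := by
  rcases eq_or_ne r' 0 with rfl | hr
  · rw [mem_filKM_zero, mem_WO] at hx ⊢
    intro i
    rw [wR_coeff]
    exact hx _
  · rw [mem_filKM_pos D hr] at hx ⊢
    obtain ⟨a, ha, b, hb, rfl⟩ := hx
    have hRa : wR a ∈ D.filLog p (r'-1) n := by
      rw [mem_filLog]
      intro i
      rw [wR_coeff]
      have hiN := i.isLt
      have h1 := ((mem_filLog D).mp ha) i.castSucc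
      have hcs : ((i.castSucc : Fin (n+1)) : ℕ) = (i : ℕ) := rfl
      rw [hcs] at h1
      have hexp : (n+1) - 1 - (i:ℕ) = (n - 1 - (i:ℕ)) + 1 := by omega
      rw [hexp, pow_succ] at h1
      exact cond_div h1
    rcases le_or_gt (padicValNat p r') n with hcase | hcase
    · refine ⟨wR a, hRa,
        TruncatedWittVector.mk p (fun k => if h : (k:ℕ) = 0 then 0
          else b.coeff ⟨(k:ℕ) - 1, by have := k.isLt; omega⟩), ?_, ?_⟩
      · rw [mem_filLog]
        intro k
        rw [coeff_mk]
        have hk := k.isLt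
        split
        next h0 => exact vtop_cond D _ _
        next h0 =>
          have h1 := ((mem_filLog D).mp hb) ⟨(k:ℕ) - 1, by omega⟩
          have hexp : min (padicValNat p r') (n+1) - 1 - ((⟨(k:ℕ) - 1, by omega⟩ :
              Fin (min (padicValNat p r') (n+1))) : ℕ)
              = (min (padicValNat p r') n - 1 - (k:ℕ)) + 1 := by
            show min (padicValNat p r') (n+1) - 1 - ((k:ℕ) - 1)
              = (min (padicValNat p r') n - 1 - (k:ℕ)) + 1
            omega
          rw [hexp, pow_succ] at h1
          exact cond_div h1
      · rw [wR_add]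
        congr 1
        apply TruncatedWittVector.ext
        intro i
        rw [wR_coeff, wVit_coeff, wVit_coeff]
        have hiN := i.isLt
        have hcs : ((i.castSucc : Fin (n+1)) : ℕ) = (i : ℕ) := rfl
        simp only [hcs]
        by_cases hc1 : (n+1) - min (padicValNat p r') (n+1) ≤ (i:ℕ) ∧
            (i:ℕ) - ((n+1) - min (padicValNat p r') (n+1)) < min (padicValNat p r') (n+1)
        · rw [dif_pos hc1, dif_pos (show n - min (padicValNat p r') n ≤ (i:ℕ) ∧
            (i:ℕ) - (n - min (padicValNat p r') n) < min (padicValNat p r') n by omega), coeff_mk]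
          rw [dif_neg (by show ¬ (i:ℕ) - (n - min (padicValNat p r') n) = 0; omega)]
          refine congrArg (fun t => b.coeff t) (Fin.ext ?_)
          show (i:ℕ) - ((n+1) - min (padicValNat p r') (n+1))
            = (i:ℕ) - (n - min (padicValNat p r') n) - 1
          omega
        · rw [dif_neg hc1]
          by_cases hc2 : n - min (padicValNat p r') n ≤ (i:ℕ) ∧
              (i:ℕ) - (n - min (padicValNat p r') n) < min (padicValNat p r') n
          · rw [dif_pos hc2, coeff_mk,
              dif_pos (by show (i:ℕ) - (n - min (padicValNat p r') n) = 0; omega)]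
          · rw [dif_neg hc2]
    · refine ⟨wR a, hRa,
        TruncatedWittVector.mk p (fun k =>
          b.coeff ⟨(k:ℕ), by have := k.isLt; omega⟩), ?_, ?_⟩
      · rw [mem_filLog]
        intro k
        rw [coeff_mk]
        have hk := k.isLt
        have h1 := ((mem_filLog D).mp hb) ⟨(k:ℕ), by omega⟩
        have hexp : min (padicValNat p r') (n+1) - 1 - ((⟨(k:ℕ), by omega⟩ :
            Fin (min (padicValNat p r') (n+1))) : ℕ)
            = (min (padicValNat p r') n - 1 - (k:ℕ)) + 1 := by
          show min (padicValNat p r') (n+1) - 1 - (k:ℕ)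
            = (min (padicValNat p r') n - 1 - (k:ℕ)) + 1
          omega
        rw [hexp, pow_succ] at h1
        exact cond_div h1
      · rw [wR_add]
        congr 1
        apply TruncatedWittVector.ext
        intro i
        rw [wR_coeff, wVit_coeff, wVit_coeff]
        have hiN := i.isLt
        have hcs : ((i.castSucc : Fin (n+1)) : ℕ) = (i : ℕ) := rfl
        simp only [hcs]
        rw [dif_pos (show (n+1) - min (padicValNat p r') (n+1) ≤ (i:ℕ) ∧
            (i:ℕ) - ((n+1) - min (padicValNat p r') (n+1)) < min (padicValNat p r') (n+1) by omega),
          dif_pos (show n - min (padicValNat p r') n ≤ (i:ℕ) ∧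
            (i:ℕ) - (n - min (padicValNat p r') n) < min (padicValNat p r') n by omega), coeff_mk]
        refine congrArg (fun t => b.coeff t) (Fin.ext ?_)
        show (i:ℕ) - ((n+1) - min (padicValNat p r') (n+1)) = (i:ℕ) - (n - min (padicValNat p r') n)
        omega

theorem filKM_wR_div {r' : ℕ} {x : TruncatedWittVector p (n+1) L}
    (hx : x ∈ D.filKM p (p * r') (n+1)) : wR x ∈ D.filKM p r' n := by
  rcases eq_or_ne r' 0 with rfl | hr
  · rw [mul_zero] at hx
    exact filKM_wR D hx
  · have hpr : p * r' ≠ 0 := by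
      have := hp.out.pos
      positivity
    have hpv : padicValNat p (p * r') = padicValNat p r' + 1 := padic_mul_p hr
    rw [mem_filKM_pos D hpr] at hx
    rw [mem_filKM_pos D hr]
    obtain ⟨a, ha, b, hb, rfl⟩ := hx
    have hr1 : 1 ≤ r' := by omega
    refine ⟨wR a, ?_, TruncatedWittVector.mk p (fun k =>
      b.coeff ⟨(k:ℕ), by have := k.isLt; omega⟩), ?_, ?_⟩
    · rw [mem_filLog]
      intro i
      rw [wR_coeff]
      have hiN := i.isLt
      have h1 := ((mem_filLog D).mp ha) i.castSucc
      have hcs : ((i.castSucc : Fin (n+1)) : ℕ) = (i : ℕ) := rfl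
      rw [hcs] at h1
      have hexp : (n+1) - 1 - (i:ℕ) = (n - 1 - (i:ℕ)) + 1 := by omega
      rw [hexp, pow_succ] at h1
      exact cond_div_strict hr1 h1
    · rw [mem_filLog]
      intro k
      rw [coeff_mk]
      have hk := k.isLt
      have h1 := ((mem_filLog D).mp hb) ⟨(k:ℕ), by omega⟩
      have hexp : min (padicValNat p (p * r')) (n+1) - 1 - ((⟨(k:ℕ), by omega⟩ :
          Fin (min (padicValNat p (p * r')) (n+1))) : ℕ)
          = (min (padicValNat p r') n - 1 - (k:ℕ)) + 1 := by
        show min (padicValNat p (p * r')) (n+1) - 1 - (k:ℕ)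
          = (min (padicValNat p r') n - 1 - (k:ℕ)) + 1
        omega
      rw [hexp, pow_succ] at h1
      exact cond_div_exact h1
    · rw [wR_add]
      congr 1
      apply TruncatedWittVector.ext
      intro i
      rw [wR_coeff, wVit_coeff, wVit_coeff]
      have hiN := i.isLt
      have hcs : ((i.castSucc : Fin (n+1)) : ℕ) = (i : ℕ) := rfl
      simp only [hcs]
      by_cases hc1 : (n+1) - min (padicValNat p (p * r')) (n+1) ≤ (i:ℕ) ∧
          (i:ℕ) - ((n+1) - min (padicValNat p (p * r')) (n+1)) < min (padicValNat p (p * r')) (n+1)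
      · rw [dif_pos hc1, dif_pos (show n - min (padicValNat p r') n ≤ (i:ℕ) ∧
          (i:ℕ) - (n - min (padicValNat p r') n) < min (padicValNat p r') n by omega), coeff_mk]
        refine congrArg (fun t => b.coeff t) (Fin.ext ?_)
        show (i:ℕ) - ((n+1) - min (padicValNat p (p * r')) (n+1))
          = (i:ℕ) - (n - min (padicValNat p r') n)
        omega
      · rw [dif_neg hc1, dif_neg (by omega)]

theorem filKM_lift {r' : ℕ} {x : TruncatedWittVector p n L}
    (hx : x ∈ D.filKM p r' n) :
    ∃ y ∈ D.filKM p (p * r') (n+1), wR y = x := by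
  rcases eq_or_ne r' 0 with rfl | hr
  · rw [mem_filKM_zero, mem_WO] at hx
    refine ⟨wRes x, ?_, wR_wRes x⟩
    rw [mul_zero, mem_filKM_zero, mem_WO]
    intro i
    rw [wRes_coeff]
    split
    · exact hx _
    · rw [v_zero]; exact le_top
  · have hpr : p * r' ≠ 0 := by
      have := hp.out.pos
      positivity
    have hpv : padicValNat p (p * r') = padicValNat p r' + 1 := padic_mul_p hr
    rw [mem_filKM_pos D hr] at hx
    obtain ⟨a, ha, b, hb, rfl⟩ := hx
    have hr1 : 1 ≤ r' := by omega
    have hp1 : 1 ≤ p := hp.out.pos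
    have hple : p ≤ p * r' := Nat.le_mul_of_pos_right p (by omega)
    have hmulsub : p * (r' - 1) = p * r' - p := by
      rw [Nat.mul_sub, mul_one]
    refine ⟨wRes a + wVit (TruncatedWittVector.mk p
      (fun k : Fin (min (padicValNat p (p * r')) (n+1)) =>
        if h : (k:ℕ) < min (padicValNat p r') n then b.coeff ⟨(k:ℕ), h⟩ else 0)), ?_, ?_⟩
    · rw [mem_filKM_pos D hpr]
      refine ⟨wRes a, ?_, _, ?_, rfl⟩
      · rw [mem_filLog]
        intro i
        rw [wRes_coeff]
        have hiN := i.isLt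
        split
        next hin =>
          have h1 := ((mem_filLog D).mp ha) ⟨(i:ℕ), hin⟩
          have h2 := cond_mul h1 p
          rw [mul_comm p (p ^ (n - 1 - ((⟨(i:ℕ), hin⟩ : Fin n) : ℕ))), ← pow_succ] at h2
          have hexp : (n - 1 - ((⟨(i:ℕ), hin⟩ : Fin n) : ℕ)) + 1 = (n+1) - 1 - (i:ℕ) := by
            show (n - 1 - (i:ℕ)) + 1 = (n+1) - 1 - (i:ℕ)
            omega
          rw [hexp] at h2
          exact cond_mono (by omega) h2
        next hin => exact vtop_cond D _ _
      · rw [mem_filLog]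
        intro k
        rw [coeff_mk]
        have hk := k.isLt
        split
        next hkm =>
          have h1 := ((mem_filLog D).mp hb) ⟨(k:ℕ), hkm⟩
          have h2 := cond_mul h1 p
          rw [mul_comm p (p ^ (min (padicValNat p r') n - 1 -
            ((⟨(k:ℕ), hkm⟩ : Fin (min (padicValNat p r') n)) : ℕ))), ← pow_succ] at h2
          have hexp : (min (padicValNat p r') n - 1 -
              ((⟨(k:ℕ), hkm⟩ : Fin (min (padicValNat p r') n)) : ℕ)) + 1
              = min (padicValNat p (p * r')) (n+1) - 1 - (k:ℕ) := by
            show (min (padicValNat p r') n - 1 - (k:ℕ)) + 1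
              = min (padicValNat p (p * r')) (n+1) - 1 - (k:ℕ)
            omega
          rw [hexp] at h2
          exact h2
        next hkm => exact vtop_cond D _ _
    · rw [wR_add, wR_wRes]
      congr 1
      apply TruncatedWittVector.ext
      intro i
      rw [wR_coeff, wVit_coeff, wVit_coeff]
      have hiN := i.isLt
      have hcs : ((i.castSucc : Fin (n+1)) : ℕ) = (i : ℕ) := rfl
      simp only [hcs]
      by_cases hc2 : n - min (padicValNat p r') n ≤ (i:ℕ) ∧
          (i:ℕ) - (n - min (padicValNat p r') n) < min (padicValNat p r') n
      · rw [dif_pos (show (n+1) - min (padicValNat p (p * r')) (n+1) ≤ (i:ℕ) ∧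
          (i:ℕ) - ((n+1) - min (padicValNat p (p * r')) (n+1)) < min (padicValNat p (p * r')) (n+1)
            by omega), dif_pos hc2, coeff_mk]
        rw [dif_pos (show (i:ℕ) - ((n+1) - min (padicValNat p (p * r')) (n+1))
            < min (padicValNat p r') n by omega)]
        refine congrArg (fun t => b.coeff t) (Fin.ext ?_)
        show (i:ℕ) - ((n+1) - min (padicValNat p (p * r')) (n+1))
          = (i:ℕ) - (n - min (padicValNat p r') n)
        omega
      · rw [dif_neg (by omega), dif_neg hc2]


theorem mem_FilP {r : ℕ} {x : TruncatedWittVector p N L} :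
    x ∈ D.FilP p r N ↔
      ∃ f : Fin N → TruncatedWittVector p N L,
        (∀ s : Fin N, f s ∈ D.filKM p (r * p ^ (s : ℕ)) N) ∧
        x = ∑ s : Fin N, p ^ (s : ℕ) • f s :=
  Iff.rfl

theorem FilP_wV {r : ℕ} {x : TruncatedWittVector p n L}
    (hx : x ∈ D.FilP p r n) : wV x ∈ D.FilP p r (n+1) := by
  rw [mem_FilP] at hx
  rw [mem_FilP]
  obtain ⟨f, hf, rfl⟩ := hx
  refine ⟨fun t => if h : (t:ℕ) < n then wV (f ⟨(t:ℕ), h⟩) else 0, fun s => ?_, ?_⟩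
  · dsimp only
    split
    next h => exact filKM_wV D (hf ⟨(s:ℕ), h⟩)
    next h => exact zero_mem_filKM D _
  · have hsum : wV (∑ s : Fin n, p ^ (s:ℕ) • f s) = ∑ s : Fin n, p ^ (s:ℕ) • wV (f s) := by
      show wVhom (∑ s : Fin n, p ^ (s:ℕ) • f s) = _
      rw [map_sum]
      exact Finset.sum_congr rfl fun s _ => by rw [AddMonoidHom.map_nsmul]; rfl
    rw [hsum, Fin.sum_univ_castSucc]
    dsimp only
    rw [dif_neg (show ¬ ((Fin.last n : Fin (n+1)) : ℕ) < n by simp), smul_zero, add_zero]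
    refine Finset.sum_congr rfl fun i _ => ?_
    have hcs : ((i.castSucc : Fin (n+1)) : ℕ) = (i:ℕ) := rfl
    simp only [hcs]
    rw [dif_pos i.isLt]

theorem FilP_wF {r : ℕ} {x : TruncatedWittVector p (n+1) L}
    (hx : x ∈ D.FilP p r (n+1)) : wF x ∈ D.FilP p r n := by
  rw [mem_FilP] at hx
  rw [mem_FilP]
  obtain ⟨f, hf, rfl⟩ := hx
  refine ⟨fun s => wF (f s.castSucc), fun s => ?_, ?_⟩
  · exact filKM_wF D (hf s.castSucc)
  · have hsum : wF (∑ t : Fin (n+1), p ^ (t:ℕ) • f t)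
        = ∑ t : Fin (n+1), p ^ (t:ℕ) • wF (f t) := by
      show wFhom (∑ t : Fin (n+1), p ^ (t:ℕ) • f t) = _
      rw [map_sum]
      exact Finset.sum_congr rfl fun t _ => by rw [AddMonoidHom.map_nsmul]; rfl
    rw [hsum, Fin.sum_univ_castSucc]
    have hlast : p ^ ((Fin.last n : Fin (n+1)) : ℕ) • wF (f (Fin.last n)) = 0 := by
      have h1 : ((Fin.last n : Fin (n+1)) : ℕ) = n := rfl
      rw [h1]
      exact pow_card_smul_zero _
    rw [hlast, add_zero]
    exact Finset.sum_congr rfl fun i _ => rfl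

theorem FilP_wR {r : ℕ} {x : TruncatedWittVector p (n+1) L}
    (hx : x ∈ D.FilP p r (n+1)) : wR x ∈ D.FilP p r n := by
  rw [mem_FilP] at hx
  rw [mem_FilP]
  obtain ⟨f, hf, rfl⟩ := hx
  refine ⟨fun s => wR (f s.castSucc), fun s => ?_, ?_⟩
  · exact filKM_wR D (hf s.castSucc)
  · have hsum : wR (∑ t : Fin (n+1), p ^ (t:ℕ) • f t)
        = ∑ t : Fin (n+1), p ^ (t:ℕ) • wR (f t) := by
      have h0 : ∀ y, wR (y : TruncatedWittVector p (n+1) L) = wRhom y :=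
        fun y => (wRhom_apply y).symm
      rw [h0, map_sum]
      exact Finset.sum_congr rfl fun t _ => by rw [AddMonoidHom.map_nsmul, ← h0]
    rw [hsum, Fin.sum_univ_castSucc]
    have hlast : p ^ ((Fin.last n : Fin (n+1)) : ℕ) • wR (f (Fin.last n)) = 0 := by
      have h1 : ((Fin.last n : Fin (n+1)) : ℕ) = n := rfl
      rw [h1]
      exact pow_card_smul_zero _
    rw [hlast, add_zero]
    exact Finset.sum_congr rfl fun i _ => rfl

theorem FilP_wR_div {r : ℕ} {x : TruncatedWittVector p (n+1) L}
    (hx : x ∈ D.FilP p (p * r) (n+1)) : wR x ∈ D.FilP p r n := by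
  rw [mem_FilP] at hx
  rw [mem_FilP]
  obtain ⟨f, hf, rfl⟩ := hx
  refine ⟨fun s => wR (f s.castSucc), fun s => ?_, ?_⟩
  · have h3 := hf s.castSucc
    have h2 : (p * r) * p ^ ((s.castSucc : Fin (n+1)) : ℕ)
        = p * (r * p ^ ((s.castSucc : Fin (n+1)) : ℕ)) := by ring
    rw [h2] at h3
    exact filKM_wR_div D h3
  · have hsum : wR (∑ t : Fin (n+1), p ^ (t:ℕ) • f t)
        = ∑ t : Fin (n+1), p ^ (t:ℕ) • wR (f t) := by
      have h0 : ∀ y, wR (y : TruncatedWittVector p (n+1) L) = wRhom y :=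
        fun y => (wRhom_apply y).symm
      rw [h0, map_sum]
      exact Finset.sum_congr rfl fun t _ => by rw [AddMonoidHom.map_nsmul, ← h0]
    rw [hsum, Fin.sum_univ_castSucc]
    have hlast : p ^ ((Fin.last n : Fin (n+1)) : ℕ) • wR (f (Fin.last n)) = 0 := by
      have h1 : ((Fin.last n : Fin (n+1)) : ℕ) = n := rfl
      rw [h1]
      exact pow_card_smul_zero _
    rw [hlast, add_zero]
    exact Finset.sum_congr rfl fun i _ => rfl

theorem FilP_wP_eq {r : ℕ} {x : TruncatedWittVector p n L}
    (hx : x ∈ D.FilP p r n) :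
    ∃ w ∈ D.FilP p (p * r) (n+1), wP x = p • w := by
  rw [mem_FilP] at hx
  obtain ⟨f, hf, rfl⟩ := hx
  have hlift : ∀ s : Fin n, ∃ y ∈ D.filKM p ((p * r) * p ^ (s:ℕ)) (n+1), wR y = f s := by
    intro s
    have h1 := filKM_lift D (hf s)
    have h2 : p * (r * p ^ (s:ℕ)) = (p * r) * p ^ (s:ℕ) := by ring
    rw [h2] at h1
    exact h1
  choose y hy1 hy2 using hlift
  refine ⟨∑ t : Fin (n+1), p ^ (t:ℕ) •
      (if h : (t:ℕ) < n then y ⟨(t:ℕ), h⟩ else 0), ?_, ?_⟩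
  · rw [mem_FilP]
    refine ⟨fun t => if h : (t:ℕ) < n then y ⟨(t:ℕ), h⟩ else 0, fun s => ?_, rfl⟩
    dsimp only
    split
    next h => exact hy1 ⟨(s:ℕ), h⟩
    next h => exact zero_mem_filKM D _
  · show p • wRes (∑ s : Fin n, p ^ (s:ℕ) • f s) = _
    apply psmul_congr
    rw [wR_wRes]
    have hsum : wR (∑ t : Fin (n+1), p ^ (t:ℕ) •
        (if h : (t:ℕ) < n then y ⟨(t:ℕ), h⟩ else 0))
        = ∑ t : Fin (n+1), p ^ (t:ℕ) • wR (if h : (t:ℕ) < n then y ⟨(t:ℕ), h⟩ else 0) := by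
      have h0 : ∀ z, wR (z : TruncatedWittVector p (n+1) L) = wRhom z :=
        fun z => (wRhom_apply z).symm
      rw [h0, map_sum]
      exact Finset.sum_congr rfl fun t _ => by rw [AddMonoidHom.map_nsmul, ← h0]
    rw [hsum, Fin.sum_univ_castSucc]
    rw [dif_neg (show ¬ ((Fin.last n : Fin (n+1)) : ℕ) < n by simp)]
    have hz : wR (0 : TruncatedWittVector p (n+1) L) = 0 := by
      rw [wR_eq, map_zero]
    rw [hz, smul_zero, add_zero]
    refine (Finset.sum_congr rfl fun i _ => ?_).symm
    have hcs : ((i.castSucc : Fin (n+1)) : ℕ) = (i:ℕ) := rfl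
    simp only [hcs]
    rw [dif_pos i.isLt, hy2 ⟨(i:ℕ), i.isLt⟩]

theorem FilP_psmul {r : ℕ} {w : TruncatedWittVector p (n+1) L}
    (hw : w ∈ D.FilP p (p * r) (n+1)) : p • w ∈ D.FilP p r (n+1) := by
  rw [mem_FilP] at hw
  rw [mem_FilP]
  obtain ⟨g, hg, rfl⟩ := hw
  refine ⟨fun t => if h : (t:ℕ) = 0 then 0 else g ⟨(t:ℕ) - 1, by have := t.isLt; omega⟩,
    fun s => ?_, ?_⟩
  · dsimp only
    split
    next h => exact zero_mem_filKM D _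
    next h =>
      have hs := s.isLt
      have h1 := hg ⟨(s:ℕ) - 1, by omega⟩
      have h2 : (p * r) * p ^ ((⟨(s:ℕ) - 1, by omega⟩ : Fin (n+1)) : ℕ) = r * p ^ (s:ℕ) := by
        show (p * r) * p ^ ((s:ℕ) - 1) = r * p ^ (s:ℕ)
        obtain ⟨j, hj⟩ : ∃ j, (s:ℕ) = j + 1 := ⟨(s:ℕ) - 1, by omega⟩
        rw [hj]
        have h3 : j + 1 - 1 = j := by omega
        rw [h3, pow_succ]
        ring
      rw [h2] at h1
      exact h1
  · rw [Finset.smul_sum]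
    have hterm : ∀ s : Fin (n+1), p • (p ^ (s:ℕ) • g s) = (p ^ ((s:ℕ) + 1)) • g s := by
      intro s
      rw [pow_succ]
      exact (mul_nsmul (g s) (p ^ (s:ℕ)) p).symm
    rw [Finset.sum_congr rfl fun s _ => hterm s]
    rw [Fin.sum_univ_castSucc, Fin.sum_univ_succ]
    dsimp only
    have hA : (p ^ (((Fin.last n : Fin (n+1)) : ℕ) + 1)) • g (Fin.last n) = 0 := by
      have h1 : ((Fin.last n : Fin (n+1)) : ℕ) = n := rfl
      rw [h1]
      exact pow_card_smul_zero _
    have hB : (p ^ ((0 : Fin (n+1)) : ℕ)) •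
        (if h : ((0 : Fin (n+1)) : ℕ) = 0 then 0
         else g ⟨((0 : Fin (n+1)) : ℕ) - 1, by omega⟩) = (0 : TruncatedWittVector p (n+1) L) := by
      rw [dif_pos (show ((0 : Fin (n+1)) : ℕ) = 0 from rfl), smul_zero]
    rw [hA, hB, add_zero, zero_add]
    refine Finset.sum_congr rfl fun i _ => ?_
    have hcs : ((i.castSucc : Fin (n+1)) : ℕ) = (i:ℕ) := rfl
    have hsucc : ((i.succ : Fin (n+1)) : ℕ) = (i:ℕ) + 1 := rfl
    simp only [hcs, hsucc]
    rw [dif_neg (by omega : ¬ ((i:ℕ) + 1 = 0))]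
    exact congrArg (fun j => (p ^ ((i:ℕ) + 1)) • g j)
      (Fin.ext (show ((i.castSucc : Fin (n+1)) : ℕ) = (i:ℕ) + 1 - 1 from rfl))
end Filtration

/-- (Weight-zero compatibility of the `p`-saturated filtration with the
Witt-vector operations.)  For all `r ≥ 0` and `n ≥ 1`: `V`, `F`, `R`, `p̲` preserve `Fil^p_r`,
and moreover `p̲(Fil^p_r Wₙ(L)) = p · Fil^p_{pr} W_{n+1}(L)`. -/
theorem statement5 (p : ℕ) [Fact p.Prime] (L : Type) [Field L] [CharP L p]
    (D : DVField L) (r n : ℕ) (hn : 1 ≤ n) :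
    (∀ x ∈ D.FilP p r n, wV x ∈ D.FilP p r (n + 1)) ∧
    (∀ x ∈ D.FilP p r (n + 1), wF x ∈ D.FilP p r n) ∧
    (∀ x ∈ D.FilP p r (n + 1), wR x ∈ D.FilP p r n) ∧
    (∀ x ∈ D.FilP p r n, wP x ∈ D.FilP p r (n + 1)) ∧
    wP '' D.FilP p r n =
      (fun w : TruncatedWittVector p (n + 1) L => p • w) '' D.FilP p (p * r) (n + 1) := by
  refine ⟨fun x hx => FilP_wV D hx,
          fun x hx => FilP_wF D hx,
          fun x hx => FilP_wR D hx,
          fun x hx => ?_, ?_⟩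
  · obtain ⟨w, hw, heq⟩ := FilP_wP_eq D hx
    rw [heq]
    exact FilP_psmul D hw
  · ext z
    constructor
    · rintro ⟨x, hx, rfl⟩
      obtain ⟨w, hw, heq⟩ := FilP_wP_eq D hx
      exact ⟨w, hw, heq.symm⟩
    · rintro ⟨w, hw, rfl⟩
      refine ⟨wR w, FilP_wR_div D hw, ?_⟩
      show p • wRes (wR w) = p • w
      exact psmul_congr (wR_wRes (wR w))
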